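/- Let N ≥ 1, let S ⊆ ℝ^N be compact, let D ⊆ ℝ^N be a bounded measurable set, and let ψ_0, …, ψ_{N'} be an orthonormal family in B_S consisting of eigenfunctions of the operator A_D : B_S → B_S, A_D f = P_S(χ_D f), with eigenvalues λ_0, …, λ_{N'} ∈ (0,1) satisfying λ_0 ≥ λ_n ≥ λ_{N'} for all 0 ≤ n ≤ N'. Let μ > 0 and 0 < τ ≤ 2/(λ_0 + λ_{N'} + 2μ). Let h be in the linear span V of ψ_0, …, ψ_{N'} and suppose the regularized operator \hat{T}_h^{(D)} f = P_S((1 − μτ) f + τ χ_D(h − f)) maps V into V. Then \hat{T}_h^{(D)} is a Banach contraction on V with Lipschitz constant |1 − τ(λ_{N'} + μ)|: for all f, g ∈ V, ‖\hat{T}_h^{(D)} f − \hat{T}_h^{(D)} g‖ ≤ |1 − τ(λ_{N'} + μ)| · ‖f − g‖, and |1 − τ(λ_{N'} + μ)| < 1. -/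

import Mathlib

open MeasureTheory FourierTransform Filter

set_option maxHeartbeats 1000000

noncomputable section

/-- The Hilbert space `L²(ℝᴺ; ℂ)` of square-integrable functions on `ℝᴺ`. -/
abbrev L2Space (N : ℕ) : Type :=
  Lp ℂ 2 (volume : Measure (EuclideanSpace ℝ (Fin N)))

/-- `f ∈ L²(ℝᴺ)` is bandlimited to `S`: its Fourier transform vanishes (a.e.) outside `S`;
equivalently, `f` agrees a.e. with the inverse Fourier transform of an integrable function `F`
vanishing outside `S`. -/
def IsBandlimited {N : ℕ} (S : Set (EuclideanSpace ℝ (Fin N))) (f : L2Space N) : Prop :=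
  ∃ F : EuclideanSpace ℝ (Fin N) → ℂ,
    Integrable F ∧ (∀ k, k ∉ S → F k = 0) ∧
      (f : EuclideanSpace ℝ (Fin N) → ℂ) =ᵐ[volume] 𝓕⁻ F

/-- Multiplication of `f ∈ L²` by the indicator function `χ_D`, as an element of `L²`. -/
def chiMul {N : ℕ} {D : Set (EuclideanSpace ℝ (Fin N))} (hD : MeasurableSet D)
    (f : L2Space N) : L2Space N :=
  ((Lp.memLp f).indicator hD).toLp (D.indicator f)

/-- The orthogonal projection of `L²(ℝᴺ)` onto a closed subspace `K`. -/
def projOf {N : ℕ} (K : Submodule ℂ (L2Space N)) (hK : IsClosed (K : Set (L2Space N))) :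
    L2Space N → L2Space N :=
  haveI : CompleteSpace K := hK.completeSpace_coe
  fun f => (K.orthogonalProjection f : L2Space N)

/-- The operator `T_h^{(D)} f = P_S (f + χ_D (h − f))` (single region). -/
def Tsingle {N : ℕ} (K : Submodule ℂ (L2Space N)) (hK : IsClosed (K : Set (L2Space N)))
    {D : Set (EuclideanSpace ℝ (Fin N))} (hD : MeasurableSet D)
    (h f : L2Space N) : L2Space N :=
  projOf K hK (f + chiMul hD (h - f))

/-- The regularized operator `T̂_h^{(D)} f = P_S ((1 − μτ) f + τ χ_D (h − f))`. -/
def TsingleReg {N : ℕ} (K : Submodule ℂ (L2Space N)) (hK : IsClosed (K : Set (L2Space N)))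
    {D : Set (EuclideanSpace ℝ (Fin N))} (hD : MeasurableSet D)
    (μ τ : ℝ) (h f : L2Space N) : L2Space N :=
  projOf K hK ((1 - μ * τ) • f + τ • chiMul hD (h - f))

section Aux

variable {N : ℕ} {D : Set (EuclideanSpace ℝ (Fin N))} (hD : MeasurableSet D)

lemma chiMul_add (a b : L2Space N) :
    chiMul hD (a + b) = chiMul hD a + chiMul hD b := by
  apply MeasureTheory.Lp.ext
  filter_upwards [MeasureTheory.MemLp.coeFn_toLp (E := ℂ) (p := 2) (μ := volume) ((Lp.memLp (a + b)).indicator hD),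
    MeasureTheory.MemLp.coeFn_toLp (E := ℂ) (p := 2) (μ := volume) ((Lp.memLp a).indicator hD),
    MeasureTheory.MemLp.coeFn_toLp (E := ℂ) (p := 2) (μ := volume) ((Lp.memLp b).indicator hD),
    Lp.coeFn_add a b, Lp.coeFn_add (chiMul hD a) (chiMul hD b)] with x h1 h2 h3 h4 h5
  show (chiMul hD (a + b) : EuclideanSpace ℝ (Fin N) → ℂ) x = _
  rw [show (chiMul hD (a + b) : EuclideanSpace ℝ (Fin N) → ℂ) x
    = D.indicator (⇑(a + b)) x from h1, h5, Pi.add_apply,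
    show (chiMul hD a : EuclideanSpace ℝ (Fin N) → ℂ) x = D.indicator (⇑a) x from h2,
    show (chiMul hD b : EuclideanSpace ℝ (Fin N) → ℂ) x = D.indicator (⇑b) x from h3]
  by_cases hx : x ∈ D
  · simp only [Set.indicator_of_mem hx]; rw [h4]; rfl
  · simp only [Set.indicator_of_notMem hx]; ring

lemma chiMul_smul (r : ℂ) (a : L2Space N) :
    chiMul hD (r • a) = r • chiMul hD a := by
  apply MeasureTheory.Lp.ext
  filter_upwards [MeasureTheory.MemLp.coeFn_toLp (E := ℂ) (p := 2) (μ := volume) ((Lp.memLp (r • a)).indicator hD),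
    MeasureTheory.MemLp.coeFn_toLp (E := ℂ) (p := 2) (μ := volume) ((Lp.memLp a).indicator hD),
    Lp.coeFn_smul r a, Lp.coeFn_smul r (chiMul hD a)] with x h1 h2 h3 h4
  show (chiMul hD (r • a) : EuclideanSpace ℝ (Fin N) → ℂ) x = _
  rw [show (chiMul hD (r • a) : EuclideanSpace ℝ (Fin N) → ℂ) x
    = D.indicator (⇑(r • a)) x from h1, h4, Pi.smul_apply,
    show (chiMul hD a : EuclideanSpace ℝ (Fin N) → ℂ) x = D.indicator (⇑a) x from h2]
  by_cases hx : x ∈ D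
  · simp only [Set.indicator_of_mem hx]; rw [h3]; rfl
  · simp only [Set.indicator_of_notMem hx]; simp

/-- `chiMul` as a linear map. -/
def chiL : L2Space N →ₗ[ℂ] L2Space N where
  toFun := chiMul hD
  map_add' := chiMul_add hD
  map_smul' := chiMul_smul hD

variable {K : Submodule ℂ (L2Space N)} (hK : IsClosed (K : Set (L2Space N)))

/-- `projOf` as a linear map. -/
def projL : L2Space N →ₗ[ℂ] L2Space N :=
  haveI : CompleteSpace K := hK.completeSpace_coe
  K.subtype ∘ₗ (K.orthogonalProjection : L2Space N →L[ℂ] K).toLinearMap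

lemma projL_apply (f : L2Space N) : projL hK f = projOf K hK f := rfl

lemma orthonormal_norm_sum {ι : Type*} [Fintype ι] {E : Type*} [NormedAddCommGroup E]
    [InnerProductSpace ℂ E] {v : ι → E} (hv : Orthonormal ℂ v) (l : ι → ℂ) :
    ‖∑ i, l i • v i‖ ^ 2 = ∑ i, ‖l i‖ ^ 2 := by
  have h := hv.inner_sum l l Finset.univ
  rw [inner_self_eq_norm_sq_to_K] at h
  have h2 : ∑ i, (starRingEnd ℂ) (l i) * l i = ∑ i, ((‖l i‖ ^ 2 : ℝ) : ℂ) :=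
    Finset.sum_congr rfl fun i _ => by rw [RCLike.conj_mul]; norm_cast
  rw [h2] at h
  have h' : (Complex.ofReal ‖∑ i, l i • v i‖) ^ 2 = ∑ i, Complex.ofReal (‖l i‖ ^ 2) := h
  exact_mod_cast h'

end Aux

/-- Let `ψ_0, …, ψ_{N'}` be an orthonormal family in `B_S` of eigenfunctions
of `A_D f = P_S(χ_D f)` with eigenvalues `λ_n ∈ (0,1)` satisfying `λ_0 ≥ λ_n ≥ λ_{N'}`.
Let `μ > 0` and `0 < τ ≤ 2/(λ_0 + λ_{N'} + 2μ)`. If `h` lies in the span `V` of the `ψ_n`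
and the regularized operator `T̂_h^{(D)} f = P_S((1 − μτ) f + τ χ_D(h − f))` maps `V` into
`V`, then it is a Banach contraction on `V` with Lipschitz constant
`|1 − τ(λ_{N'} + μ)| < 1`. -/
theorem truncated_pswf_regularized_contraction (N : ℕ) (hN : 1 ≤ N)
    (S : Set (EuclideanSpace ℝ (Fin N))) (hS : IsCompact S)
    (K : Submodule ℂ (L2Space N))
    (hKset : (K : Set (L2Space N)) = {f : L2Space N | IsBandlimited S f})
    (hK : IsClosed (K : Set (L2Space N)))
    (D : Set (EuclideanSpace ℝ (Fin N))) (hD : MeasurableSet D)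
    (hDbdd : Bornology.IsBounded D)
    (n' : ℕ) (ψ : Fin (n' + 1) → L2Space N) (hψmem : ∀ n, IsBandlimited S (ψ n))
    (hψon : Orthonormal ℂ ψ)
    (lam : Fin (n' + 1) → ℝ) (hlam : ∀ n, lam n ∈ Set.Ioo (0 : ℝ) 1)
    (horder : ∀ n, lam (Fin.last n') ≤ lam n ∧ lam n ≤ lam 0)
    (heig : ∀ n, projOf K hK (chiMul hD (ψ n)) = (lam n : ℂ) • ψ n)
    (μ τ : ℝ) (hμ : 0 < μ) (hτ0 : 0 < τ)
    (hτ : τ ≤ 2 / (lam 0 + lam (Fin.last n') + 2 * μ))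
    (h : L2Space N) (hh : h ∈ Submodule.span ℂ (Set.range ψ))
    (hmaps : ∀ f : L2Space N, f ∈ Submodule.span ℂ (Set.range ψ) →
      TsingleReg K hK hD μ τ h f ∈ Submodule.span ℂ (Set.range ψ)) :
    (∀ f g : L2Space N, f ∈ Submodule.span ℂ (Set.range ψ) →
        g ∈ Submodule.span ℂ (Set.range ψ) →
          ‖TsingleReg K hK hD μ τ h f - TsingleReg K hK hD μ τ h g‖ ≤
            |1 - τ * (lam (Fin.last n') + μ)| * ‖f - g‖) ∧
      |1 - τ * (lam (Fin.last n') + μ)| < 1 := by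
  classical
  haveI : CompleteSpace K := hK.completeSpace_coe
  have hψK : ∀ n, ψ n ∈ K := fun n => by
    rw [← SetLike.mem_coe, hKset]; exact hψmem n
  have hVK : Submodule.span ℂ (Set.range ψ) ≤ K := by
    rw [Submodule.span_le]; rintro _ ⟨n, rfl⟩; exact hψK n
  have hl0 := hlam 0
  have hlN := hlam (Fin.last n')
  have hden : 0 < lam 0 + lam (Fin.last n') + 2 * μ := by
    have := hl0.1; have := hlN.1; linarith
  have hτden : τ * (lam 0 + lam (Fin.last n') + 2 * μ) ≤ 2 := (le_div_iff₀ hden).mp hτ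
  have hlast0 : lam (Fin.last n') ≤ lam 0 := (horder 0).1
  have hC0 : 0 ≤ 1 - τ * (lam (Fin.last n') + μ) := by
    nlinarith [mul_nonneg hτ0.le (sub_nonneg.mpr hlast0)]
  have hCabs : |1 - τ * (lam (Fin.last n') + μ)| = 1 - τ * (lam (Fin.last n') + μ) :=
    abs_of_nonneg hC0
  have hClt : |1 - τ * (lam (Fin.last n') + μ)| < 1 := by
    rw [hCabs]
    have : 0 < τ * (lam (Fin.last n') + μ) := mul_pos hτ0 (by linarith [hlN.1])
    linarith
  refine ⟨?_, hClt⟩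
  intro f g hf hg
  obtain ⟨cf, hcf⟩ := (Submodule.mem_span_range_iff_exists_fun ℂ).mp hf
  obtain ⟨cg, hcg⟩ := (Submodule.mem_span_range_iff_exists_fun ℂ).mp hg
  set c : Fin (n' + 1) → ℂ := fun i => cf i - cg i with hc
  have hu : f - g = ∑ i, c i • ψ i := by
    rw [← hcf, ← hcg, ← Finset.sum_sub_distrib]
    exact Finset.sum_congr rfl fun i _ => (sub_smul _ _ _).symm
  have hfgK : f - g ∈ K := hVK (Submodule.sub_mem _ hf hg)
  have hproj_self : projL hK (f - g) = f - g :=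
    Submodule.starProjection_eq_self_iff.mpr hfgK
  have hT : TsingleReg K hK hD μ τ h f - TsingleReg K hK hD μ τ h g
      = ((1 - μ * τ : ℝ) : ℂ) • (f - g) - ((τ : ℝ) : ℂ) • projL hK (chiL hD (f - g)) := by
    show projL hK ((1 - μ * τ) • f + τ • chiMul hD (h - f))
        - projL hK ((1 - μ * τ) • g + τ • chiMul hD (h - g)) = _
    rw [← map_sub]
    have s1 : ∀ (r : ℝ) (x : L2Space N), r • x = ((r : ℝ) : ℂ) • x := fun r x =>
      RCLike.real_smul_eq_coe_smul r x
    have e0 : (1 - μ * τ) • f + τ • chiMul hD (h - f)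
        - ((1 - μ * τ) • g + τ • chiMul hD (h - g))
        = ((1 - μ * τ : ℝ) : ℂ) • (f - g) - ((τ : ℝ) : ℂ) • chiL hD (f - g) := by
      rw [s1 (1 - μ * τ) f, s1 (1 - μ * τ) g, s1 τ (chiMul hD (h - f)),
        s1 τ (chiMul hD (h - g)),
        show chiMul hD (h - f) = chiL hD h - chiL hD f from map_sub (chiL hD) h f,
        show chiMul hD (h - g) = chiL hD h - chiL hD g from map_sub (chiL hD) h g,
        map_sub (chiL hD) f g, smul_sub, smul_sub, smul_sub, smul_sub]
      abel
    rw [e0, map_sub, _root_.map_smul, _root_.map_smul, hproj_self]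
  have hA : projL hK (chiL hD (f - g)) = ∑ i, c i • ((lam i : ℂ) • ψ i) := by
    rw [hu, map_sum, map_sum]
    refine Finset.sum_congr rfl fun i _ => ?_
    rw [_root_.map_smul, _root_.map_smul]
    congr 1
    exact heig i
  set d : Fin (n' + 1) → ℂ := fun i => ((1 - τ * (lam i + μ) : ℝ) : ℂ) * c i with hd
  have hTsum : TsingleReg K hK hD μ τ h f - TsingleReg K hK hD μ τ h g
      = ∑ i, d i • ψ i := by
    rw [hT, hA, hu, Finset.smul_sum, Finset.smul_sum, ← Finset.sum_sub_distrib]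
    refine Finset.sum_congr rfl fun i _ => ?_
    rw [smul_smul, smul_smul, smul_smul, ← sub_smul]
    congr 1
    simp only [hd]
    push_cast
    ring
  have hnorm2 : ‖TsingleReg K hK hD μ τ h f - TsingleReg K hK hD μ τ h g‖ ^ 2
      = ∑ i, ‖d i‖ ^ 2 := by rw [hTsum]; exact orthonormal_norm_sum hψon d
  have hnormu : ‖f - g‖ ^ 2 = ∑ i, ‖c i‖ ^ 2 := by
    rw [hu]; exact orthonormal_norm_sum hψon c
  have hbound : ∀ i, |1 - τ * (lam i + μ)| ≤ |1 - τ * (lam (Fin.last n') + μ)| := by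
    intro i
    rw [hCabs, abs_le]
    have h1 := (horder i).1
    have h2 := (horder i).2
    constructor
    · nlinarith [mul_nonneg hτ0.le (sub_nonneg.mpr h2)]
    · nlinarith [mul_nonneg hτ0.le (sub_nonneg.mpr h1)]
  have hdle : ∀ i, ‖d i‖ ≤ |1 - τ * (lam (Fin.last n') + μ)| * ‖c i‖ := by
    intro i
    rw [hd]
    simp only []
    rw [norm_mul, Complex.norm_real, Real.norm_eq_abs]
    exact mul_le_mul_of_nonneg_right (hbound i) (norm_nonneg _)
  have hsq : ‖TsingleReg K hK hD μ τ h f - TsingleReg K hK hD μ τ h g‖ ^ 2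
      ≤ (|1 - τ * (lam (Fin.last n') + μ)| * ‖f - g‖) ^ 2 := by
    rw [hnorm2, mul_pow, hnormu, Finset.mul_sum]
    refine Finset.sum_le_sum fun i _ => ?_
    rw [← mul_pow]
    exact pow_le_pow_left₀ (norm_nonneg _) (hdle i) 2
  have hnn : 0 ≤ |1 - τ * (lam (Fin.last n') + μ)| * ‖f - g‖ := by positivity
  nlinarith [norm_nonneg (TsingleReg K hK hD μ τ h f - TsingleReg K hK hD μ τ h g), hsq, hnn]
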